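/- If φ is a pure state with φ ∉ F, then Ω(φ) = ∞; more generally Ω(ρ) = ∞ for any resourceful state ρ whose support admits no free state with equal support. In particular, if Ω(ρ) < ∞, there exists no positive linear free map E (i.e., E(σ) ∈ cone(F) for all σ ∈ F) with E(ρ) ∝ φ for a pure resourceful φ. -/

import Mathlib

open scoped ENNReal NNReal ComplexOrder
open Matrix

variable {ι κ : Type*}

/-- Max-relative entropy (non-logarithmic): `inf { λ ≥ 0 : ρ ≤ λσ }`, with `inf ∅ = ∞`.
Here `A ≤ B` means `B - A` is positive semidefinite. -/
noncomputable def Rmax [Fintype ι] (ρ σ : Matrix ι ι ℂ) : ℝ≥0∞ :=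
  sInf {x : ℝ≥0∞ | ∃ l : ℝ≥0, x = (l : ℝ≥0∞) ∧ ((l : ℝ) • σ - ρ).PosSemidef}

/-- A state: positive semidefinite with unit trace. -/
def IsState [Fintype ι] (ρ : Matrix ι ι ℂ) : Prop :=
  ρ.PosSemidef ∧ ρ.trace = 1

/-- A pure state: a rank-one (idempotent) state. -/
def IsPure [Fintype ι] (φ : Matrix ι ι ℂ) : Prop :=
  φ.PosSemidef ∧ φ * φ = φ ∧ φ.trace = 1

/-- The cone generated by a set of states. -/
noncomputable def cone (F : Set (Matrix ι ι ℂ)) : Set (Matrix ι ι ℂ) :=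
  {x | ∃ (l : ℝ≥0) (σ : Matrix ι ι ℂ), σ ∈ F ∧ x = (l : ℝ) • σ}

/-- Projective robustness `Ω(ρ) = inf_{σ ∈ F} Rmax(ρ‖σ) Rmax(σ‖ρ)`. -/
noncomputable def Omega [Fintype ι] (F : Set (Matrix ι ι ℂ)) (ρ : Matrix ι ι ℂ) : ℝ≥0∞ :=
  ⨅ σ ∈ F, Rmax ρ σ * Rmax σ ρ

/-- Support of an operator, as the range of the associated linear map. -/
noncomputable def msupport [Fintype ι] (ρ : Matrix ι ι ℂ) : Submodule ℂ (ι → ℂ) :=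
  LinearMap.range ρ.mulVecLin

/-- A positive linear map on matrices. -/
def IsPosMap [Fintype ι] [Fintype κ] (E : Matrix ι ι ℂ →ₗ[ℂ] Matrix κ κ ℂ) : Prop :=
  ∀ ρ, ρ.PosSemidef → (E ρ).PosSemidef

/-- Maximal fidelity with the free set: `F_F(φ) = max_{σ ∈ F} ⟨φ|σ|φ⟩ = max_{σ ∈ F} Tr(φσ)`. -/
noncomputable def Ffree [Fintype ι] (F : Set (Matrix ι ι ℂ)) (φ : Matrix ι ι ℂ) : ℝ :=
  sSup {x : ℝ | ∃ σ ∈ F, x = ((φ * σ).trace).re}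


lemma realSmul_eq (r : ℝ) (A : Matrix ι ι ℂ) : r • A = (r : ℂ) • A := by
  ext i j; simp [Complex.real_smul]

lemma mulVec_ext [Fintype ι] [DecidableEq ι] {A B : Matrix ι ι ℂ}
    (h : ∀ x, A *ᵥ x = B *ᵥ x) : A = B :=
  Matrix.toLin'.injective (LinearMap.ext fun x => by simp [Matrix.toLin'_apply, h x])

lemma psd_trace_nonneg [Fintype ι] [DecidableEq ι] {A : Matrix ι ι ℂ}
    (hA : A.PosSemidef) : 0 ≤ A.trace := by
  rw [Matrix.trace]
  apply Finset.sum_nonneg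
  intro i _
  simpa [← Pi.single_star, Matrix.mulVec_single, single_dotProduct] using hA.dotProduct_mulVec_nonneg (Pi.single i 1)



lemma support_le [Fintype ι] [DecidableEq ι] {ρ σ : Matrix ι ι ℂ}
    (hρ : ρ.PosSemidef) (hσ : σ.PosSemidef) {c d : ℝ} (hd : 0 < d)
    (h : ((c : ℂ) • σ - (d : ℂ) • ρ).PosSemidef) : msupport ρ ≤ msupport σ := by
  have hker : ∀ x, σ *ᵥ x = 0 → ρ *ᵥ x = 0 := by
    intro x hx
    have h1 := h.dotProduct_mulVec_nonneg x
    rw [Matrix.sub_mulVec, Matrix.smul_mulVec, Matrix.smul_mulVec, hx, smul_zero,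
      zero_sub, dotProduct_neg, dotProduct_smul, smul_eq_mul] at h1
    have h2 : (d : ℂ) * (star x ⬝ᵥ ρ *ᵥ x) ≤ 0 := by
      have := neg_nonneg.mp h1; exact this
    have h3 : 0 ≤ (d : ℂ) * (star x ⬝ᵥ ρ *ᵥ x) :=
      mul_nonneg (by positivity) (hρ.dotProduct_mulVec_nonneg x)
    have h4 : (d : ℂ) * (star x ⬝ᵥ ρ *ᵥ x) = 0 := le_antisymm h2 h3
    have h5 : star x ⬝ᵥ ρ *ᵥ x = 0 := by
      have hd0 : (d : ℂ) ≠ 0 := by exact_mod_cast hd.ne'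
      exact (mul_eq_zero.mp h4).resolve_left hd0
    exact (hρ.dotProduct_mulVec_zero_iff x).mp h5
  -- ker σ ⊓ range σ = ⊥
  have hdisj : LinearMap.ker σ.mulVecLin ⊓ LinearMap.range σ.mulVecLin = ⊥ := by
    rw [Submodule.eq_bot_iff]
    rintro z ⟨hzk, w, rfl⟩
    have hzk' : σ *ᵥ (σ *ᵥ w) = 0 := hzk
    have : star (σ *ᵥ w) ⬝ᵥ (σ *ᵥ w) = 0 := by
      have e : star (σ *ᵥ w) ⬝ᵥ (σ *ᵥ w) = star w ⬝ᵥ (σ *ᵥ (σ *ᵥ w)) := by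
        rw [Matrix.star_mulVec, hσ.1, ← Matrix.dotProduct_mulVec]
      rw [e, hzk', dotProduct_zero]
    exact dotProduct_star_self_eq_zero.mp this
  have hsup : LinearMap.ker σ.mulVecLin ⊔ LinearMap.range σ.mulVecLin = ⊤ := by
    apply Submodule.eq_top_of_finrank_eq
    have h1 := LinearMap.finrank_range_add_finrank_ker σ.mulVecLin
    have h2 := Submodule.finrank_sup_add_finrank_inf_eq (LinearMap.ker σ.mulVecLin)
      (LinearMap.range σ.mulVecLin)
    rw [hdisj] at h2
    simp only [finrank_bot, add_zero] at h2
    omega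
  rintro y ⟨x, rfl⟩
  have hy : ρ.mulVecLin x ∈ (⊤ : Submodule ℂ (ι → ℂ)) := Submodule.mem_top
  rw [← hsup] at hy
  obtain ⟨k, hk, r, hr, hkr⟩ := Submodule.mem_sup.mp hy
  obtain ⟨w, rfl⟩ := hr
  simp only [Matrix.mulVecLin_apply] at hkr
  have hρk : ρ *ᵥ k = 0 := hker k hk
  have hσk : σ *ᵥ k = 0 := hk
  have e1 : star k ⬝ᵥ (ρ *ᵥ x) = 0 := by
    rw [Matrix.dotProduct_mulVec, ← hρ.1, ← Matrix.star_mulVec, hρk]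
    simp
  have e2 : star k ⬝ᵥ (σ *ᵥ w) = 0 := by
    rw [Matrix.dotProduct_mulVec, ← hσ.1, ← Matrix.star_mulVec, hσk]
    simp
  have hk0 : k = 0 := by
    apply dotProduct_star_self_eq_zero.mp
    have : star k ⬝ᵥ (k + σ *ᵥ w) = 0 := by rw [hkr]; exact e1
    rwa [dotProduct_add, e2, add_zero] at this
  rw [hk0, zero_add] at hkr
  exact ⟨w, hkr⟩





lemma pure_vecMulVec [Fintype ι] [DecidableEq ι] {φ : Matrix ι ι ℂ} (hφ : IsPure φ) :
    ∃ u : ι → ℂ, φ = vecMulVec u (star u) := by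
  obtain ⟨hpsd, hidem, htr⟩ := hφ
  have hH := hpsd.isHermitian
  set U : Matrix ι ι ℂ := (Matrix.IsHermitian.eigenvectorUnitary hH : Matrix ι ι ℂ) with hU
  set d : ι → ℝ := hH.eigenvalues with hd
  have hUU : star U * U = 1 := Unitary.coe_star_mul_self _
  have hUU' : U * star U = 1 := Unitary.coe_mul_star_self _
  have hdiag : star U * φ * U = Matrix.diagonal (RCLike.ofReal ∘ d) :=
    by have := hH.conjStarAlgAut_star_eigenvectorUnitary
       rw [Unitary.conjStarAlgAut_star_apply] at this; exact this
  -- eigenvalues are 0 or 1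
  have h01 : ∀ i, d i = 0 ∨ d i = 1 := by
    intro i
    have hsq : (Matrix.diagonal (RCLike.ofReal ∘ d) : Matrix ι ι ℂ) * Matrix.diagonal (RCLike.ofReal ∘ d)
        = Matrix.diagonal (RCLike.ofReal ∘ d) := by
      rw [← hdiag]
      calc star U * φ * U * (star U * φ * U)
          = star U * φ * (U * star U) * φ * U := by simp only [mul_assoc]
        _ = star U * φ * U := by rw [hUU', mul_one, mul_assoc, mul_assoc, ← mul_assoc φ φ U,
              hidem, mul_assoc]
    rw [Matrix.diagonal_mul_diagonal] at hsq
    have := Matrix.ext_iff.mpr hsq i i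
    simp only [Matrix.diagonal_apply_eq, Function.comp_apply, Pi.mul_apply] at this
    have h' : (d i : ℂ) * (d i : ℂ) = (d i : ℂ) := by exact_mod_cast this
    have : (d i : ℂ) * ((d i : ℂ) - 1) = 0 := by ring_nf; linear_combination h'
    rcases mul_eq_zero.mp this with h | h
    · left; exact_mod_cast h
    · right; have : (d i : ℂ) = 1 := by linear_combination h
      exact_mod_cast this
  -- trace is the sum of the eigenvalues
  have htrd : ∑ i, d i = 1 := by
    have h1 : φ.trace = (Matrix.diagonal (RCLike.ofReal ∘ d) : Matrix ι ι ℂ).trace := by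
      conv_lhs => rw [hH.spectral_theorem, Unitary.conjStarAlgAut_apply]
      rw [Matrix.trace_mul_cycle, ← hU, hUU, one_mul]
    rw [htr, Matrix.trace_diagonal] at h1
    have : ((1 : ℂ)) = ((∑ i, d i : ℝ) : ℂ) := by push_cast [h1]; simp [h1.symm]
    exact_mod_cast this.symm
  -- exactly one eigenvalue equals 1
  have hnn : ∀ i, 0 ≤ d i := fun i => by rcases h01 i with h | h <;> simp [h]
  obtain ⟨i₀, hi₀⟩ : ∃ i, d i = 1 := by
    by_contra hc
    push_neg at hc
    have : ∀ i, d i = 0 := fun i => (h01 i).resolve_right (hc i)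
    simp [this] at htrd
  have hrest : ∀ j, j ≠ i₀ → d j = 0 := by
    intro j hj
    by_contra hc
    have hdj : d j = 1 := (h01 j).resolve_left hc
    have h2 : d i₀ + d j ≤ ∑ i, d i := by
      have := Finset.add_sum_erase Finset.univ d (Finset.mem_univ i₀)
      rw [← this]
      have : d j ≤ ∑ i ∈ Finset.univ.erase i₀, d i :=
        Finset.single_le_sum (fun i _ => hnn i)
          (Finset.mem_erase.mpr ⟨hj, Finset.mem_univ j⟩)
      linarith
    rw [htrd, hi₀, hdj] at h2
    linarith
  refine ⟨fun i => U i i₀, ?_⟩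
  have hdfun : ((RCLike.ofReal ∘ d : ι → ℂ)) = Pi.single i₀ 1 := by
    funext k
    by_cases hk : k = i₀
    · subst hk; simp [hi₀]
    · simp [hrest k hk, Pi.single_eq_of_ne hk]
  have hφ' : φ = U * Matrix.diagonal (Pi.single i₀ 1) * star U := by
    conv_lhs => rw [hH.spectral_theorem, Unitary.conjStarAlgAut_apply]
    rw [hdfun]
  ext i j
  rw [hφ', Matrix.mul_apply]
  simp only [Matrix.mul_diagonal, Matrix.star_eq_conjTranspose,
    Matrix.conjTranspose_apply, Pi.single_apply, mul_ite, mul_one, mul_zero, ite_mul, zero_mul,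
    Finset.sum_ite_eq', Finset.mem_univ, if_true, Matrix.vecMulVec_apply, Pi.star_apply]

lemma vecMulVec_mulVec_eq [Fintype ι] (u y : ι → ℂ) :
    vecMulVec u (star u) *ᵥ y = (star u ⬝ᵥ y) • u := by
  ext i
  simp [Matrix.mulVec, dotProduct, Matrix.vecMulVec_apply, Finset.sum_mul, Finset.mul_sum,
    mul_comm, mul_assoc, mul_left_comm]

lemma state_eq_pure [Fintype ι] [DecidableEq ι] {σ φ : Matrix ι ι ℂ}
    (hσ : IsState σ) (hφ : IsPure φ) (hsupp : msupport σ ≤ msupport φ) : σ = φ := by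
  obtain ⟨u, hu⟩ := pure_vecMulVec hφ
  obtain ⟨hσpsd, hσtr⟩ := hσ
  obtain ⟨hφpsd, hidem, hφtr⟩ := hφ
  have hφσ : φ * σ = σ := by
    apply mulVec_ext; intro x
    have hmem : σ *ᵥ x ∈ msupport φ := hsupp ⟨x, rfl⟩
    obtain ⟨w, hw⟩ := hmem
    simp only [Matrix.mulVecLin_apply] at hw
    rw [← Matrix.mulVec_mulVec, ← hw, Matrix.mulVec_mulVec, hidem]
  have hσφ : σ * φ = σ := by
    have h := congrArg Matrix.conjTranspose hφσ
    rwa [Matrix.conjTranspose_mul, hσpsd.1, hφpsd.1] at h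
  have hkey : σ = φ * σ * φ := by rw [mul_assoc, hσφ, hφσ]
  set a := star u ⬝ᵥ σ *ᵥ u with ha
  have hσa : σ = a • φ := by
    apply mulVec_ext; intro x
    conv_lhs => rw [hkey]
    rw [hu]
    simp only [← Matrix.mulVec_mulVec, vecMulVec_mulVec_eq, Matrix.mulVec_smul,
      Matrix.smul_mulVec, dotProduct_smul, smul_smul, smul_eq_mul, ← ha,
      mul_comm, mul_assoc, mul_left_comm]
  have hatr : a = 1 := by
    have h := hσtr
    rw [hσa, Matrix.trace_smul, hφtr, smul_eq_mul, mul_one] at h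
    exact h
  rw [hσa, hatr, one_smul]



lemma rmax_witness [Fintype ι] {ρ σ : Matrix ι ι ℂ} (h : Rmax ρ σ ≠ ⊤) :
    ∃ l : ℝ≥0, ((l : ℝ) • σ - ρ).PosSemidef := by
  by_contra hc
  push_neg at hc
  apply h
  rw [Rmax]
  convert sInf_empty
  · rfl
  rw [Set.eq_empty_iff_forall_notMem]
  rintro x ⟨l, rfl, hpsd⟩
  exact hc l hpsd

lemma one_le_rmax [Fintype ι] [DecidableEq ι] {ρ σ : Matrix ι ι ℂ}
    (hρ : IsState ρ) (hσ : IsState σ) : 1 ≤ Rmax ρ σ := by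
  apply le_sInf
  rintro x ⟨l, rfl, hpsd⟩
  have htr := psd_trace_nonneg hpsd
  rw [Matrix.trace_sub, realSmul_eq, Matrix.trace_smul, hρ.2, hσ.2, smul_eq_mul, mul_one] at htr
  have h1 : (1 : ℝ) ≤ (l : ℝ) := by
    have := (Complex.le_def.mp htr).1
    simpa using this
  exact_mod_cast h1

lemma exists_support_eq [Fintype ι] [DecidableEq ι] {F : Set (Matrix ι ι ℂ)}
    (hFstate : ∀ σ ∈ F, IsState σ) {ρ : Matrix ι ι ℂ} (hρ : IsState ρ)
    (hΩ : Omega F ρ ≠ ⊤) : ∃ σ ∈ F, msupport σ = msupport ρ := by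
  obtain ⟨σ, hσF, hfin⟩ : ∃ σ ∈ F, Rmax ρ σ * Rmax σ ρ ≠ ⊤ := by
    by_contra hc
    push_neg at hc
    exact hΩ (by rw [Omega]; simp only [iInf_eq_top]; exact hc)
  have hne1 : Rmax σ ρ ≠ 0 :=
    (lt_of_lt_of_le zero_lt_one (one_le_rmax (hFstate σ hσF) hρ)).ne'
  have hne2 : Rmax ρ σ ≠ 0 :=
    (lt_of_lt_of_le zero_lt_one (one_le_rmax hρ (hFstate σ hσF))).ne'
  have h1 : Rmax ρ σ ≠ ⊤ := by
    intro h; exact hfin (by rw [h, ENNReal.top_mul hne1])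
  have h2 : Rmax σ ρ ≠ ⊤ := by
    intro h; exact hfin (by rw [h, ENNReal.mul_top hne2])
  obtain ⟨l, hl⟩ := rmax_witness h1
  obtain ⟨m, hm⟩ := rmax_witness h2
  rw [realSmul_eq] at hl hm
  have le1 : msupport ρ ≤ msupport σ := by
    refine support_le hρ.1 (hFstate σ hσF).1 (c := ((l : ℝ) : ℝ)) (d := 1) one_pos ?_
    simpa using hl
  have le2 : msupport σ ≤ msupport ρ := by
    refine support_le (hFstate σ hσF).1 hρ.1 (c := ((m : ℝ) : ℝ)) (d := 1) one_pos ?_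
    simpa using hm
  exact ⟨σ, hσF, le_antisymm le2 le1⟩

/-- `Ω(φ) = ∞` for every resourceful pure state; more generally `Ω(ρ) = ∞` when no
free state shares the support of `ρ`; hence a state with finite `Ω` cannot be mapped by any free
positive map to (a positive multiple of) a resourceful pure state. -/
theorem omega_infinite_and_no_purification [Fintype ι] [DecidableEq ι]
    (F : Set (Matrix ι ι ℂ)) (hFne : F.Nonempty) (hFcl : IsClosed F)
    (hFconv : Convex ℝ F) (hFstate : ∀ σ ∈ F, IsState σ) :
    (∀ φ : Matrix ι ι ℂ, IsPure φ → φ ∉ F → Omega F φ = ⊤) ∧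
    (∀ ρ : Matrix ι ι ℂ, IsState ρ → ρ ∉ F →
      (¬ ∃ σ ∈ F, msupport σ = msupport ρ) → Omega F ρ = ⊤) ∧
    (∀ ρ : Matrix ι ι ℂ, IsState ρ → Omega F ρ < ⊤ →
      ¬ ∃ (E : Matrix ι ι ℂ →ₗ[ℂ] Matrix ι ι ℂ) (φ : Matrix ι ι ℂ) (p : ℝ),
        IsPosMap E ∧ (∀ σ ∈ F, E σ ∈ cone F) ∧
        IsPure φ ∧ φ ∉ F ∧ 0 < p ∧ E ρ = p • φ) := by
  refine ⟨?_, ?_, ?_⟩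
  · intro φ hφ hφF
    by_contra hΩ
    obtain ⟨σ, hσF, hsupp⟩ := exists_support_eq hFstate ⟨hφ.1, hφ.2.2⟩ hΩ
    exact hφF ((state_eq_pure (hFstate σ hσF) hφ (le_of_eq hsupp)) ▸ hσF)
  · intro ρ hρ hρF hno
    by_contra hΩ
    exact hno (exists_support_eq hFstate hρ hΩ)
  · rintro ρ hρ hΩ ⟨E, φ, p, hE, hEF, hφ, hφF, hp, hEρ⟩
    obtain ⟨σ, hσF, hfin⟩ : ∃ σ ∈ F, Rmax ρ σ * Rmax σ ρ ≠ ⊤ := by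
      by_contra hc
      push_neg at hc
      exact hΩ.ne (by rw [Omega]; simp only [iInf_eq_top]; exact hc)
    have hne1 : Rmax σ ρ ≠ 0 :=
      (lt_of_lt_of_le zero_lt_one (one_le_rmax (hFstate σ hσF) hρ)).ne'
    have hne2 : Rmax ρ σ ≠ 0 :=
      (lt_of_lt_of_le zero_lt_one (one_le_rmax hρ (hFstate σ hσF))).ne'
    have h1 : Rmax ρ σ ≠ ⊤ := by
      intro h; exact hfin (by rw [h, ENNReal.top_mul hne1])
    have h2 : Rmax σ ρ ≠ ⊤ := by
      intro h; exact hfin (by rw [h, ENNReal.mul_top hne2])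
    obtain ⟨l, hl⟩ := rmax_witness h1
    obtain ⟨m, hm⟩ := rmax_witness h2
    rw [realSmul_eq] at hl hm hEρ
    obtain ⟨k, σ', hσ'F, hEσ⟩ := hEF σ hσF
    rw [realSmul_eq] at hEσ
    have hA1 : (((l : ℝ) : ℂ) • (((k : ℝ) : ℂ) • σ') - ((p : ℝ) : ℂ) • φ).PosSemidef := by
      have h := hE _ hl
      rwa [map_sub, _root_.map_smul, hEσ, hEρ] at h
    have hA2 : (((m : ℝ) : ℂ) • (((p : ℝ) : ℂ) • φ) - ((k : ℝ) : ℂ) • σ').PosSemidef := by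
      have h := hE _ hm
      rwa [map_sub, _root_.map_smul, hEσ, hEρ] at h
    by_cases hk : (k : ℝ) = 0
    · have htr := psd_trace_nonneg hA1
      rw [hk] at htr
      simp only [Complex.ofReal_zero, zero_smul, smul_zero, zero_sub, Matrix.trace_neg,
        Matrix.trace_smul, hφ.2.2, smul_eq_mul, mul_one] at htr
      have : (0 : ℝ) ≤ -p := by
        have h := (Complex.le_def.mp htr).1
        simpa using h
      linarith
    · have hkpos : (0 : ℝ) < (k : ℝ) := lt_of_le_of_ne k.2 (Ne.symm hk)
      have hsupφ : msupport σ' ≤ msupport φ := by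
        refine support_le (hFstate σ' hσ'F).1 hφ.1 (c := (m : ℝ) * p) (d := (k : ℝ)) hkpos ?_
        have e : (((m : ℝ) * p : ℝ) : ℂ) • φ = ((m : ℝ) : ℂ) • (((p : ℝ) : ℂ) • φ) := by
          rw [smul_smul]; norm_cast
        rw [e]
        exact hA2
      exact hφF ((state_eq_pure (hFstate σ' hσ'F) hφ hsupφ) ▸ hσ'F)
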